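/- Let f : ℝ → ℝ be convex, let S be a global minimizer of f, let Ŝ ≥ S be a point at which P is a subgradient of f (i.e. f(z) ≥ f(Ŝ) + P·(z − Ŝ) for all z ∈ ℝ), let P ≥ 0 and y ≥ 0, and let x ∈ ℝ satisfy S + y ≤ x ≤ Ŝ + y. Then u = y minimizes the one-step objective φ(u) = f(x − u) + P·max(y, u) over u ≥ 0, i.e. f(x − y) + P·y ≤ f(x − u) + P·max(y, u) for every u ≥ 0. -/

import Mathlib

/-- A convex function is nondecreasing to the right of a global minimizer. -/
lemma convex_mono_right (f : ℝ → ℝ) (hf : ConvexOn ℝ Set.univ f) (S : ℝ)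
    (hS : ∀ z : ℝ, f S ≤ f z) {a b : ℝ} (hSa : S ≤ a) (hab : a ≤ b) :
    f a ≤ f b := by
  rcases eq_or_lt_of_le hab with rfl | hlt
  · exact le_refl _
  have hSb : S < b := lt_of_le_of_lt hSa hlt
  have hden : (0:ℝ) < b - S := by linarith
  have h1 : (0:ℝ) ≤ (b - a) / (b - S) := div_nonneg (by linarith) (by linarith)
  have h2 : (0:ℝ) ≤ (a - S) / (b - S) := div_nonneg (by linarith) (by linarith)
  have hsum : (b - a) / (b - S) + (a - S) / (b - S) = 1 := by
    field_simp
    ring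
  have h := hf.2 (Set.mem_univ S) (Set.mem_univ b) h1 h2 hsum
  simp only [smul_eq_mul] at h
  have hc : (b - a) / (b - S) * S + (a - S) / (b - S) * b = a := by
    field_simp
    ring
  rw [hc] at h
  have hfb : (b - a) / (b - S) * f b + (a - S) / (b - S) * f b = f b := by
    field_simp
    ring
  linarith [h, mul_le_mul_of_nonneg_left (hS b) h1, hfb]

/-- Left of a subgradient point `Shat` with subgradient `P`, increments of a convex
function are bounded by `P` times the step. -/
lemma convex_slope_le (f : ℝ → ℝ) (hf : ConvexOn ℝ Set.univ f) (Shat P : ℝ)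
    (hsub : ∀ z : ℝ, f Shat + P * (z - Shat) ≤ f z) {a b : ℝ}
    (hab : a ≤ b) (hbS : b ≤ Shat) :
    f b ≤ f a + P * (b - a) := by
  rcases eq_or_lt_of_le hab with rfl | hlt
  · simp
  rcases eq_or_lt_of_le hbS with rfl | hlt2
  · have := hsub a
    nlinarith
  have hden : (0:ℝ) < Shat - a := by linarith
  have h1 : (0:ℝ) ≤ (Shat - b) / (Shat - a) := div_nonneg (by linarith) (by linarith)
  have h2 : (0:ℝ) ≤ (b - a) / (Shat - a) := div_nonneg (by linarith) (by linarith)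
  have hsum : (Shat - b) / (Shat - a) + (b - a) / (Shat - a) = 1 := by
    field_simp
    ring
  have h := hf.2 (Set.mem_univ a) (Set.mem_univ Shat) h1 h2 hsum
  simp only [smul_eq_mul] at h
  have hc : (Shat - b) / (Shat - a) * a + (b - a) / (Shat - a) * Shat = b := by
    field_simp
    ring
  rw [hc] at h
  have hSa := hsub a
  have hl : (Shat - b) / (Shat - a) + (b - a) / (Shat - a) = 1 := hsum
  -- f Shat ≤ f a + P * (Shat - a)
  have hfS : f Shat ≤ f a + P * (Shat - a) := by nlinarith
  have hm : (b - a) / (Shat - a) * (Shat - a) = b - a := by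
    field_simp
  have hfa : (Shat - b) / (Shat - a) * f a + (b - a) / (Shat - a) * f a = f a := by
    field_simp
    ring
  have hexp : (b - a) / (Shat - a) * (f a + P * (Shat - a)) =
      (b - a) / (Shat - a) * f a + P * ((b - a) / (Shat - a) * (Shat - a)) := by ring
  have hm2 : P * ((b - a) / (Shat - a) * (Shat - a)) = P * (b - a) := by rw [hm]
  linarith [h, mul_le_mul_of_nonneg_left hfS h2, hexp, hm2, hfa]

/-- If `f` is convex with global minimizer `S`, `Ŝ ≥ S` is a point where `P`
is a subgradient of `f`, `P ≥ 0`, `y ≥ 0` and `S + y ≤ x ≤ Ŝ + y`, then `u = y` minimizes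
the one-step peak-pricing objective `u ↦ f (x - u) + P * max y u` over `u ≥ 0`. -/
theorem one_step_peak_cap_optimal
    (f : ℝ → ℝ) (hf : ConvexOn ℝ Set.univ f)
    (S Shat P y x : ℝ)
    (hS : ∀ z : ℝ, f S ≤ f z)
    (hSle : S ≤ Shat)
    (hsub : ∀ z : ℝ, f Shat + P * (z - Shat) ≤ f z)
    (hP : 0 ≤ P) (hy : 0 ≤ y)
    (hx₁ : S + y ≤ x) (hx₂ : x ≤ Shat + y) :
    ∀ u : ℝ, 0 ≤ u → f (x - y) + P * y ≤ f (x - u) + P * max y u := by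
  intro u hu
  rcases le_total u y with h | h
  · rw [max_eq_left h]
    have : f (x - y) ≤ f (x - u) :=
      convex_mono_right f hf S hS (by linarith) (by linarith)
    linarith
  · rw [max_eq_right h]
    have : f (x - y) ≤ f (x - u) + P * ((x - y) - (x - u)) :=
      convex_slope_le f hf Shat P hsub (by linarith) (by linarith)
    nlinarith
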